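/- Let N ≥ 2 and let φ be an A_N-positive primitive automorphism of the free group F_N. Let w ∈ F_N, let k ≥ 1, and set ψ = i_w ∘ φ^k. If u ∈ F_N is nontrivial (u ≠ 1) and ψ(u) = u, then u is not pure: the reduced word of u contains at least one positive letter and at least one negative letter. (Proposition "notpure" of the paper.) -/

import Mathlib

/-- A word of the free group is pure positive if its reduced word is nonempty
and all its letters are positive. -/
def PurePos {N : ℕ} (v : FreeGroup (Fin N)) : Prop :=
  v.toWord ≠ [] ∧ ∀ l ∈ v.toWord, l.2 = true

/-- A word of the free group is pure negative if its reduced word is nonempty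
and all its letters are negative. -/
def PureNeg {N : ℕ} (v : FreeGroup (Fin N)) : Prop :=
  v.toWord ≠ [] ∧ ∀ l ∈ v.toWord, l.2 = false

/-- An automorphism of the free group is `A_N`-positive if the image of each
generator is pure positive. -/
def IsPositive {N : ℕ} (φ : MulAut (FreeGroup (Fin N))) : Prop :=
  ∀ a : Fin N, PurePos (φ (FreeGroup.of a))

/-- An `A_N`-positive automorphism is primitive if some power sends each generator
to a word containing every positive letter. -/
def IsPrimitive {N : ℕ} (φ : MulAut (FreeGroup (Fin N))) : Prop :=
  ∃ k : ℕ, 1 ≤ k ∧ ∀ a b : Fin N, (b, true) ∈ ((φ ^ k) (FreeGroup.of a)).toWord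

namespace NotPureAux

open FreeGroup Multiplicative

variable {N : ℕ}

/-- exponent sum vector of a word -/
def wsum (L : List (Fin N × Bool)) : Fin N → ℤ :=
  (L.map fun l => if l.2 then Pi.single l.1 (1:ℤ) else -Pi.single l.1 1).sum

@[simp] lemma wsum_nil : wsum ([] : List (Fin N × Bool)) = 0 := rfl

lemma wsum_cons (l : Fin N × Bool) (L : List (Fin N × Bool)) :
    wsum (l :: L) = (if l.2 then Pi.single l.1 (1:ℤ) else -Pi.single l.1 1) + wsum L := by
  simp [wsum]

/-- the abelianization homomorphism -/
def sgm : FreeGroup (Fin N) →* Multiplicative (Fin N → ℤ) :=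
  FreeGroup.lift fun a => ofAdd (Pi.single a (1:ℤ))

lemma sgm_of (a : Fin N) : sgm (FreeGroup.of a) = ofAdd (Pi.single a (1:ℤ)) :=
  FreeGroup.lift_apply_of

lemma sgm_mk (L : List (Fin N × Bool)) :
    sgm (FreeGroup.mk L) = ofAdd (wsum L) := by
  induction L with
  | nil =>
    have : FreeGroup.mk ([] : List (Fin N × Bool)) = 1 := (FreeGroup.one_eq_mk).symm
    simp [this]
  | cons l L ih =>
    have h1 : FreeGroup.mk (l :: L) = FreeGroup.mk [l] * FreeGroup.mk L := by
      rw [FreeGroup.mul_mk]; rfl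
    rcases l with ⟨a, b⟩
    cases b
    · have h2 : FreeGroup.mk [((a : Fin N), false)] = (FreeGroup.of a)⁻¹ := by
        rw [show FreeGroup.of a = FreeGroup.mk [(a, true)] from rfl, FreeGroup.inv_mk]
        rfl
      rw [h1, _root_.map_mul, ih, h2, _root_.map_inv, sgm_of, wsum_cons]
      simp [← ofAdd_add, ← ofAdd_neg]
    · have h2 : FreeGroup.mk [((a : Fin N), true)] = FreeGroup.of a := rfl
      rw [h1, _root_.map_mul, ih, h2, sgm_of, wsum_cons]
      simp [← ofAdd_add]

lemma sgm_toWord (u : FreeGroup (Fin N)) : toAdd (sgm u) = wsum u.toWord := by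
  conv_lhs => rw [← FreeGroup.mk_toWord (x := u)]
  rw [sgm_mk]; rfl

lemma wsum_nonneg {L : List (Fin N × Bool)} (h : ∀ l ∈ L, l.2 = true) (b : Fin N) :
    0 ≤ wsum L b := by
  induction L with
  | nil => simp
  | cons l L ih =>
    have hl := h l (by simp)
    rw [wsum_cons, if_pos hl]
    have : 0 ≤ wsum L b := ih fun x hx => h x (by simp [hx])
    have h2 : (0:ℤ) ≤ (Pi.single l.1 1 : Fin N → ℤ) b := by
      rcases eq_or_ne b l.1 with rfl | hne <;> simp [Pi.single_apply, *]
    simpa using add_nonneg h2 this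

lemma wsum_total {L : List (Fin N × Bool)} (h : ∀ l ∈ L, l.2 = true) :
    ∑ b, wsum L b = L.length := by
  induction L with
  | nil => simp
  | cons l L ih =>
    have hl := h l (by simp)
    rw [wsum_cons, if_pos hl]
    have h1 : ∑ b, wsum L b = L.length := ih fun x hx => h x (by simp [hx])
    have h2 : ∑ b, Pi.single l.1 (1:ℤ) b = 1 := by
      simp [Pi.single_apply]
    simp only [Pi.add_apply, Finset.sum_add_distrib, h1, h2, List.length_cons]
    push_cast; ring

lemma wsum_ge_one {L : List (Fin N × Bool)} (h : ∀ l ∈ L, l.2 = true) {b : Fin N}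
    (hb : (b, true) ∈ L) : 1 ≤ wsum L b := by
  induction L with
  | nil => simp at hb
  | cons l L ih =>
    have hl := h l (by simp)
    rw [wsum_cons, if_pos hl]
    have hL : ∀ x ∈ L, x.2 = true := fun x hx => h x (by simp [hx])
    rcases List.mem_cons.mp hb with rfl | hb'
    · have : 0 ≤ wsum L b := wsum_nonneg hL b
      simp only [Pi.add_apply, Pi.single_eq_same]
      linarith
    · have h1 := ih hL hb'
      have h2 : (0:ℤ) ≤ (Pi.single l.1 1 : Fin N → ℤ) b := by
        rcases eq_or_ne b l.1 with rfl | hne <;> simp [Pi.single_apply, *]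
      simp only [Pi.add_apply]
      linarith


lemma reduce_pos {L : List (Fin N × Bool)} (h : ∀ l ∈ L, l.2 = true) :
    FreeGroup.reduce L = L := by
  induction L with
  | nil => rfl
  | cons x L ih =>
    have hx := h x (by simp)
    have hL : FreeGroup.reduce L = L := ih fun l hl => h l (by simp [hl])
    rw [FreeGroup.reduce.cons, hL]
    cases L with
    | nil => rfl
    | cons hd tl =>
      have hhd := h hd (by simp)
      simp [hx, hhd]

lemma toWord_mk_pos {L : List (Fin N × Bool)} (h : ∀ l ∈ L, l.2 = true) :
    (FreeGroup.mk L).toWord = L := by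
  rw [FreeGroup.toWord_mk, reduce_pos h]

lemma purePos_mul {x y : FreeGroup (Fin N)} (hx : PurePos x) (hy : PurePos y) :
    PurePos (x * y) ∧ (x * y).toWord = x.toWord ++ y.toWord := by
  have hxy : x * y = FreeGroup.mk (x.toWord ++ y.toWord) := by
    rw [← FreeGroup.mul_mk, FreeGroup.mk_toWord, FreeGroup.mk_toWord]
  have hall : ∀ l ∈ x.toWord ++ y.toWord, l.2 = true := by
    intro l hl
    rcases List.mem_append.mp hl with h' | h'
    · exact hx.2 l h'
    · exact hy.2 l h'
  have ht : (x * y).toWord = x.toWord ++ y.toWord := by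
    rw [hxy, toWord_mk_pos hall]
  refine ⟨⟨?_, ht ▸ hall⟩, ht⟩
  rw [ht]
  simp [hx.1]

lemma map_purePos (f : FreeGroup (Fin N) →* FreeGroup (Fin N))
    (hf : ∀ a : Fin N, PurePos (f (FreeGroup.of a))) {v : FreeGroup (Fin N)}
    (hv : PurePos v) : PurePos (f v) := by
  obtain ⟨hne, hall⟩ := hv
  have key : ∀ L : List (Fin N × Bool), L ≠ [] → (∀ l ∈ L, l.2 = true) →
      PurePos (f (FreeGroup.mk L)) := by
    intro L
    induction L with
    | nil => intro h; exact absurd rfl h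
    | cons l L ih =>
      intro _ hL
      have hl : l = (l.1, true) := Prod.ext rfl (hL l (by simp))
      have hsplit : FreeGroup.mk (l :: L) = FreeGroup.of l.1 * FreeGroup.mk L := by
        rw [show FreeGroup.of l.1 = FreeGroup.mk [(l.1, true)] from rfl, FreeGroup.mul_mk,
          ← hl]
        rfl
      cases L with
      | nil =>
        rw [hsplit, show FreeGroup.mk ([] : List (Fin N × Bool)) = 1 from
          FreeGroup.one_eq_mk.symm, mul_one]
        exact hf l.1
      | cons m M =>
        rw [hsplit, _root_.map_mul]
        exact (purePos_mul (hf l.1) (ih (by simp) fun x hx => hL x (by simp [hx]))).1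
  have h2 := key v.toWord (by simpa using hne) hall
  rwa [FreeGroup.mk_toWord] at h2

lemma sigma_comp (f : FreeGroup (Fin N) →* FreeGroup (Fin N)) (u : FreeGroup (Fin N)) :
    toAdd (sgm (f u)) = ∑ a, toAdd (sgm u) a • toAdd (sgm (f (FreeGroup.of a))) := by
  set T : (Fin N → ℤ) →+ (Fin N → ℤ) :=
    { toFun := fun x => ∑ a, x a • toAdd (sgm (f (FreeGroup.of a)))
      map_zero' := by simp
      map_add' := by intro x y; simp [add_smul, Finset.sum_add_distrib] } with hT
  have heq : sgm.comp f = (AddMonoidHom.toMultiplicative T).comp sgm := by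
    apply FreeGroup.ext_hom
    intro a
    simp only [MonoidHom.comp_apply, sgm_of, AddMonoidHom.toMultiplicative,
      MulEquiv.coe_mk, Equiv.coe_fn_mk, MonoidHom.coe_mk, OneHom.coe_mk, toAdd_ofAdd, hT,
      AddMonoidHom.coe_mk, ZeroHom.coe_mk]
    have : ∑ b, (Pi.single a (1:ℤ) : Fin N → ℤ) b • toAdd (sgm (f (FreeGroup.of b)))
        = toAdd (sgm (f (FreeGroup.of a))) := by
      rw [Finset.sum_eq_single a]
      · simp
      · intro b _ hb
        simp [Pi.single_apply, hb]
      · simp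
    rw [this]
    simp
  have h2 := DFunLike.congr_fun heq u
  simp only [MonoidHom.comp_apply] at h2
  rw [h2]
  rfl

lemma purePos_pow {φ : MulAut (FreeGroup (Fin N))} (hpos : IsPositive φ) (m : ℕ) (a : Fin N) :
    PurePos ((φ ^ m) (FreeGroup.of a)) := by
  induction m with
  | zero =>
    refine ⟨?_, ?_⟩ <;> simp [FreeGroup.toWord_of]
  | succ m ih =>
    have h : (φ ^ (m + 1)) (FreeGroup.of a) = φ ((φ ^ m) (FreeGroup.of a)) := by
      rw [pow_succ' φ m]
      rfl
    rw [h]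
    exact map_purePos φ.toMonoidHom hpos ih

lemma not_all_pos {N : ℕ} (hN : 2 ≤ N)
    (φ : MulAut (FreeGroup (Fin N))) (hpos : IsPositive φ) (hprim : IsPrimitive φ)
    (w : FreeGroup (Fin N)) (k : ℕ) (hk : 1 ≤ k)
    (u : FreeGroup (Fin N)) (hu : u ≠ 1)
    (hfix : w⁻¹ * (φ ^ k) u * w = u) :
    ¬ ∀ l ∈ u.toWord, l.2 = true := by
  intro hall
  set e : Fin N → ℤ := toAdd (sgm u) with he
  have hew : e = wsum u.toWord := sgm_toWord u
  have hnil : u.toWord ≠ [] := fun h => hu (FreeGroup.toWord_eq_nil_iff.mp h)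
  have henn : ∀ b, 0 ≤ e b := by rw [hew]; exact wsum_nonneg hall
  have hS : ∑ b, e b = u.toWord.length := by rw [hew]; exact wsum_total hall
  have hS1 : 1 ≤ ∑ b, e b := by
    rw [hS]
    have : u.toWord.length ≠ 0 := by simpa using hnil
    exact_mod_cast Nat.one_le_iff_ne_zero.mpr this
  -- the fixed equation in the abelianization
  have hstep : toAdd (sgm ((φ ^ k) u)) = e := by
    have h1 := congrArg sgm hfix
    simp only [_root_.map_mul, _root_.map_inv] at h1
    rw [mul_comm (sgm w)⁻¹ (sgm ((φ ^ k) u)), mul_assoc, inv_mul_cancel, mul_one] at h1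
    rw [he, ← h1]
  -- iterate
  have hiter : ∀ n : ℕ, toAdd (sgm ((φ ^ (k * n)) u)) = e := by
    intro n
    induction n with
    | zero => simpa using he.symm
    | succ n ih =>
      have hpow : (φ ^ (k * (n + 1))) u = (φ ^ k) ((φ ^ (k * n)) u) := by
        rw [show k * (n + 1) = k + k * n by ring, pow_add φ k (k*n)]
        rfl
      have hA := sigma_comp (MulEquiv.toMonoidHom (φ ^ k)) ((φ ^ (k * n)) u)
      have hB := sigma_comp (MulEquiv.toMonoidHom (φ ^ k)) u
      simp only [MulEquiv.coe_toMonoidHom] at hA hB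
      rw [← he] at hB
      rw [hpow, hA, ih, ← hB, hstep]
  obtain ⟨m, hm1, hmem⟩ := hprim
  -- rows of φ^(k*m) are entrywise ≥ 1
  have hrow : ∀ a b : Fin N, 1 ≤ toAdd (sgm ((φ ^ (k * m)) (FreeGroup.of a))) b := by
    intro a b
    obtain ⟨k', rfl⟩ : ∃ k', k = k' + 1 := ⟨k - 1, by omega⟩
    have hsplit : (φ ^ ((k' + 1) * m)) (FreeGroup.of a)
        = (φ ^ m) ((φ ^ (k' * m)) (FreeGroup.of a)) := by
      rw [show (k' + 1) * m = m + k' * m by ring, pow_add φ m (k'*m)]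
      rfl
    set v := (φ ^ (k' * m)) (FreeGroup.of a) with hv
    have hvp : PurePos v := purePos_pow hpos _ a
    have hx : ∀ c, 0 ≤ toAdd (sgm v) c := by
      rw [sgm_toWord]; exact wsum_nonneg hvp.2
    have hxs : 1 ≤ ∑ c, toAdd (sgm v) c := by
      rw [sgm_toWord, wsum_total hvp.2]
      have : v.toWord.length ≠ 0 := by simpa using hvp.1
      exact_mod_cast Nat.one_le_iff_ne_zero.mpr this
    have hr : ∀ c, 1 ≤ toAdd (sgm ((φ ^ m) (FreeGroup.of c))) b := by
      intro c
      rw [sgm_toWord]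
      exact wsum_ge_one (purePos_pow hpos m c).2 (hmem c b)
    have hC := sigma_comp (MulEquiv.toMonoidHom (φ ^ m)) v
    simp only [MulEquiv.coe_toMonoidHom] at hC
    rw [hsplit, hC]
    have : ∑ c, (toAdd (sgm v) c • toAdd (sgm ((φ ^ m) (FreeGroup.of c)))) b
        = ∑ c, toAdd (sgm v) c * toAdd (sgm ((φ ^ m) (FreeGroup.of c))) b := by
      simp [Pi.smul_apply, smul_eq_mul]
    rw [Finset.sum_apply, this]
    calc (1:ℤ) ≤ ∑ c, toAdd (sgm v) c := hxs
      _ ≤ ∑ c, toAdd (sgm v) c * toAdd (sgm ((φ ^ m) (FreeGroup.of c))) b :=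
        Finset.sum_le_sum fun c _ => le_mul_of_one_le_right (hx c) (hr c)
  -- main inequality
  have hmain : ∀ b, ∑ a, e a ≤ e b := by
    intro b
    have hD := sigma_comp (MulEquiv.toMonoidHom (φ ^ (k * m))) u
    simp only [MulEquiv.coe_toMonoidHom] at hD
    rw [← he] at hD
    have h1 : e b = ∑ a, e a * toAdd (sgm ((φ ^ (k * m)) (FreeGroup.of a))) b := by
      conv_lhs => rw [← hiter m]
      rw [hD, Finset.sum_apply]
      simp [Pi.smul_apply, smul_eq_mul]
    rw [h1]
    calc ∑ a, e a = ∑ a, e a * 1 := by simp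
      _ ≤ ∑ a, e a * toAdd (sgm ((φ ^ (k * m)) (FreeGroup.of a))) b :=
        Finset.sum_le_sum fun a _ => mul_le_mul_of_nonneg_left (hrow a b) (henn a)
  have hNS : (N : ℤ) * (∑ a, e a) ≤ ∑ b, e b := by
    calc (N : ℤ) * ∑ a, e a = ∑ _b : Fin N, ∑ a, e a := by
          simp [Finset.sum_const, mul_comm]
      _ ≤ ∑ b, e b := Finset.sum_le_sum fun b _ => hmain b
  have hN2 : (2 : ℤ) ≤ (N : ℤ) := by exact_mod_cast hN
  nlinarith [hS1, hNS, hN2]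

end NotPureAux

theorem not_pure_aux {N : ℕ} (hN : 2 ≤ N)
    (φ : MulAut (FreeGroup (Fin N))) (hpos : IsPositive φ) (hprim : IsPrimitive φ)
    (w : FreeGroup (Fin N)) (k : ℕ) (hk : 1 ≤ k)
    (u : FreeGroup (Fin N)) (hu : u ≠ 1)
    (hfix : w⁻¹ * (φ ^ k) u * w = u) :
    (∃ l ∈ u.toWord, l.2 = true) ∧ (∃ l ∈ u.toWord, l.2 = false) := by
  have hneg : ∃ l ∈ u.toWord, l.2 = false := by
    by_contra h
    push_neg at h
    refine NotPureAux.not_all_pos hN φ hpos hprim w k hk u hu hfix fun l hl => ?_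
    cases hb : l.2 with
    | false => exact absurd hb (h l hl)
    | true => rfl
  have hfix' : w⁻¹ * (φ ^ k) u⁻¹ * w = u⁻¹ := by
    have h2 := congrArg (·⁻¹) hfix
    simp only [mul_inv_rev, inv_inv] at h2
    rw [_root_.map_inv]
    simpa [mul_assoc] using h2
  have hu' : u⁻¹ ≠ 1 := fun h => hu (inv_eq_one.mp h)
  have hpos' : ∃ l ∈ (u⁻¹).toWord, l.2 = false := by
    by_contra h
    push_neg at h
    refine NotPureAux.not_all_pos hN φ hpos hprim w k hk u⁻¹ hu' hfix' fun l hl => ?_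
    cases hb : l.2 with
    | false => exact absurd hb (h l hl)
    | true => rfl
  obtain ⟨l, hl, hl2⟩ := hpos'
  rw [FreeGroup.toWord_inv] at hl
  simp only [FreeGroup.invRev, List.mem_reverse, List.mem_map] at hl
  obtain ⟨g, hg, hgl⟩ := hl
  refine ⟨⟨g, hg, ?_⟩, hneg⟩
  rw [← hgl] at hl2
  simpa using hl2

/-- If `ψ = i_w ∘ φ^k` fixes a nontrivial word `u`, then `u` is not pure:
its reduced word contains a positive letter and a negative letter. -/
theorem fixed_word_not_pure {N : ℕ} (hN : 2 ≤ N)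
    (φ : MulAut (FreeGroup (Fin N))) (hpos : IsPositive φ) (hprim : IsPrimitive φ)
    (w : FreeGroup (Fin N)) (k : ℕ) (hk : 1 ≤ k)
    (u : FreeGroup (Fin N)) (hu : u ≠ 1)
    (hfix : w⁻¹ * (φ ^ k) u * w = u) :
    (∃ l ∈ u.toWord, l.2 = true) ∧ (∃ l ∈ u.toWord, l.2 = false) :=
  not_pure_aux hN φ hpos hprim w k hk u hu hfix
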